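/- arXiv:2505.14500 — 2 statements merged into one kernel-verified Lean document; each statement's English description precedes it below -/
import Mathlib

section
/- For every real x, ∫_{π/3}^{2π/3} sin(u)·F(x,u) du = (1/2)·log((1 + x + x²)/(1 − x + x²)). -/
open Real

lemma denom_pos (x : ℝ) {c : ℝ} (h1 : -(1/2) ≤ c) (h2 : c ≤ 1/2) :
    0 < 1 + x ^ 2 - 2 * x * c := by
  rcases le_or_gt 0 x with hx | hx
  · nlinarith [sq_nonneg (x - 1), mul_nonneg hx (sub_nonneg.2 h2)]
  · nlinarith [sq_nonneg (x + 1), mul_nonneg (le_of_lt (neg_pos.2 hx)) (sub_nonneg.2 h2)]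

lemma cos_bounds {u : ℝ} (hu : u ∈ Set.uIcc (π/3) (2*π/3)) :
    -(1/2) ≤ Real.cos u ∧ Real.cos u ≤ 1/2 := by
  have hpi := Real.pi_pos
  rw [Set.uIcc_of_le (by linarith)] at hu
  obtain ⟨h1, h2⟩ := hu
  constructor
  · have : Real.cos (2*π/3) ≤ Real.cos u := by
      apply Real.cos_le_cos_of_nonneg_of_le_pi (by linarith) (by linarith) h2
    rwa [show (2*π/3 : ℝ) = π - π/3 by ring, Real.cos_pi_sub, Real.cos_pi_div_three] at this
  · have : Real.cos u ≤ Real.cos (π/3) := by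
      apply Real.cos_le_cos_of_nonneg_of_le_pi (by linarith) (by linarith) h1
    rwa [Real.cos_pi_div_three] at this

theorem integral_sin_F (x : ℝ) :
    ∫ u in (π / 3)..(2 * π / 3),
        Real.sin u * (x / (1 + x ^ 2 - 2 * x * Real.cos u))
      = (1 / 2) * Real.log ((1 + x + x ^ 2) / (1 - x + x ^ 2)) := by
  have hpi := Real.pi_pos
  have key : ∀ u ∈ Set.uIcc (π/3) (2*π/3),
      HasDerivAt (fun v => (1/2) * Real.log (1 + x ^ 2 - 2 * x * Real.cos v))
        (Real.sin u * (x / (1 + x ^ 2 - 2 * x * Real.cos u))) u := by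
    intro u hu
    obtain ⟨hc1, hc2⟩ := cos_bounds hu
    have hpos := denom_pos x hc1 hc2
    have h1 : HasDerivAt (fun v => 1 + x ^ 2 - 2 * x * Real.cos v)
        (2 * x * Real.sin u) u := by
      have := ((Real.hasDerivAt_cos u).const_mul (2*x)).const_sub (1 + x ^ 2)
      refine this.congr_deriv ?_
      ring
    have h2 := (h1.log (ne_of_gt hpos)).const_mul (1/2 : ℝ)
    refine h2.congr_deriv ?_
    field_simp
  have hcont : IntervalIntegrable
      (fun u => Real.sin u * (x / (1 + x ^ 2 - 2 * x * Real.cos u)))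
      MeasureTheory.volume (π/3) (2*π/3) := by
    apply ContinuousOn.intervalIntegrable
    apply ContinuousOn.mul (Real.continuous_sin.continuousOn)
    apply ContinuousOn.div continuousOn_const
    · exact (Continuous.continuousOn (by continuity))
    · intro u hu
      obtain ⟨hc1, hc2⟩ := cos_bounds hu
      exact ne_of_gt (denom_pos x hc1 hc2)
  rw [intervalIntegral.integral_eq_sub_of_hasDerivAt key hcont]
  have e1 : Real.cos (2*π/3) = -(1/2) := by
    rw [show (2*π/3 : ℝ) = π - π/3 by ring, Real.cos_pi_sub, Real.cos_pi_div_three]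
  have e2 : Real.cos (π/3) = 1/2 := Real.cos_pi_div_three
  simp only [e1, e2]
  have p1 : (0:ℝ) < 1 + x + x ^ 2 := by nlinarith [sq_nonneg (x+1)]
  have p2 : (0:ℝ) < 1 - x + x ^ 2 := by nlinarith [sq_nonneg (x-1)]
  rw [Real.log_div (ne_of_gt p1) (ne_of_gt p2)]
  ring_nf
end

section
/- For every t ∈ [π/3, π/2), Z(1, t) < 0, where Z(x,t) := L(φ)·(G(x,t) + H(x,t)) − (G(φ,t) + H(φ,t))·L(x), φ = (1+√5)/2. -/
set_option maxHeartbeats 1000000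


open Real

noncomputable def G (x t : ℝ) : ℝ :=
  x * ((x ^ 2 + 1) * Real.cos t - 2 * x) / (x ^ 2 + 1 - 2 * x * Real.cos t) ^ 2

noncomputable def H (x t : ℝ) : ℝ :=
  x * ((x ^ 2 + 1) * Real.cos t + 2 * x) / (x ^ 2 + 1 + 2 * x * Real.cos t) ^ 2

noncomputable def L (x : ℝ) : ℝ :=
  (1 / 2) * Real.log ((1 + x + x ^ 2) / (1 - x + x ^ 2))

noncomputable def phi : ℝ := (1 + Real.sqrt 5) / 2

noncomputable def Z (x t : ℝ) : ℝ :=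
  L phi * (G x t + H x t) - (G phi t + H phi t) * L x

theorem Z_one_neg (t : ℝ) (ht : t ∈ Set.Ico (π / 3) (π / 2)) : Z 1 t < 0 := by
  obtain ⟨ht1, ht2⟩ := ht
  have hπ : (0:ℝ) < π := pi_pos
  set c : ℝ := Real.cos t with hc
  have hc0 : 0 < c := Real.cos_pos_of_mem_Ioo ⟨by linarith, ht2⟩
  have hc12 : c ≤ 1/2 := by
    have h := Real.cos_le_cos_of_nonneg_of_le_pi (by positivity) (by linarith) ht1
    rwa [Real.cos_pi_div_three] at h
  have hc1 : c < 1 := by linarith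
  -- sqrt 5 facts
  have hr5 : Real.sqrt 5 ^ 2 = 5 := Real.sq_sqrt (by norm_num)
  have hrpos : 0 < Real.sqrt 5 := Real.sqrt_pos.mpr (by norm_num)
  have hrlo : 2.23 < Real.sqrt 5 := by nlinarith
  have hrhi : Real.sqrt 5 < 2.24 := by nlinarith
  have hphi_sq : phi ^ 2 = phi + 1 := by unfold phi; linear_combination hr5 / 4
  have hphi_lo : 1.61 < phi := by unfold phi; linarith
  have hphi_hi : phi < 1.62 := by unfold phi; linarith
  have hrphi : Real.sqrt 5 = 2 * phi - 1 := by unfold phi; ring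
  -- L values
  have hL1 : L 1 = Real.log 3 / 2 := by unfold L; norm_num; ring
  have hLphi : L phi = Real.log phi := by
    unfold L
    have h1 : 1 + phi + phi ^ 2 = 2 * phi ^ 2 := by linarith
    have h2 : 1 - phi + phi ^ 2 = 2 := by linarith
    rw [h1, h2, show (2 * phi ^ 2) / 2 = phi ^ 2 by ring, Real.log_pow]
    push_cast; ring
  -- G 1 t + H 1 t
  have hA : G 1 t + H 1 t = -(c / (1 - c ^ 2)) := by
    unfold G H
    rw [← hc]
    have d1 : (2:ℝ) - 2 * c ≠ 0 := by nlinarith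
    have d2 : (2:ℝ) + 2 * c ≠ 0 := by nlinarith
    have d3 : (1:ℝ) - c ^ 2 ≠ 0 := by nlinarith
    rw [show (1:ℝ) ^ 2 + 1 - 2 * 1 * c = 2 - 2 * c by ring,
        show (1:ℝ) ^ 2 + 1 + 2 * 1 * c = 2 + 2 * c by ring]
    rw [neg_div', div_add_div _ _ (pow_ne_zero 2 d1) (pow_ne_zero 2 d2),
      div_eq_div_iff (mul_ne_zero (pow_ne_zero 2 d1) (pow_ne_zero 2 d2)) d3]
    ring
  -- G phi t + H phi t
  have hd1 : (0:ℝ) < phi ^ 2 + 1 - 2 * phi * c := by nlinarith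
  have hd2 : (0:ℝ) < phi ^ 2 + 1 + 2 * phi * c := by nlinarith
  have hd3 : (0:ℝ) < 5 - 4 * c ^ 2 := by nlinarith
  have hB : G phi t + H phi t = 2 * Real.sqrt 5 * c * (4 * c ^ 2 - 3) / (5 - 4 * c ^ 2) ^ 2 := by
    unfold G H
    rw [← hc, hrphi]
    rw [div_add_div _ _ (pow_ne_zero 2 hd1.ne') (pow_ne_zero 2 hd2.ne'),
      div_eq_div_iff (mul_ne_zero (pow_ne_zero 2 hd1.ne') (pow_ne_zero 2 hd2.ne')) (pow_ne_zero 2 hd3.ne')]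
    linear_combination ((6:ℝ) * phi^0 * c^1 + (-8:ℝ) * phi^0 * c^3 + (-68:ℝ) * phi^1 * c^1 + (104:ℝ) * phi^1 * c^3 + (-32:ℝ) * phi^1 * c^5 + (98:ℝ) * phi^2 * c^1 + (-192:ℝ) * phi^2 * c^3 + (96:ℝ) * phi^2 * c^5 + (36:ℝ) * phi^3 * c^1 + (-144:ℝ) * phi^3 * c^3 + (224:ℝ) * phi^3 * c^5 + (-128:ℝ) * phi^3 * c^7 + (98:ℝ) * phi^4 * c^1 + (-192:ℝ) * phi^4 * c^3 + (96:ℝ) * phi^4 * c^5 + (116:ℝ) * phi^5 * c^1 + (-264:ℝ) * phi^5 * c^3 + (160:ℝ) * phi^5 * c^5 + (6:ℝ) * phi^6 * c^1 + (-8:ℝ) * phi^6 * c^3 + (12:ℝ) * phi^7 * c^1 + (-16:ℝ) * phi^7 * c^3) * hphi_sq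
  -- log bounds
  have hlog3 : Real.log 3 < 6/5 := by
    rw [Real.log_lt_iff_lt_exp (by norm_num)]
    have h1 : Real.exp (6/5) = Real.exp 1 * Real.exp (1/5) := by
      rw [← Real.exp_add]; norm_num
    have h2 : (1:ℝ)/5 + 1 ≤ Real.exp (1/5) := Real.add_one_le_exp _
    have h3 : (2.7182818283 : ℝ) < Real.exp 1 := Real.exp_one_gt_d9
    nlinarith [Real.exp_pos (1/5)]
  have hlogphi : 1 - 1/phi ≤ Real.log phi := by
    have hp : 0 < phi := by linarith
    have h := Real.log_le_sub_one_of_pos (x := 1/phi) (by positivity)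
    rw [Real.log_div one_ne_zero (by linarith), Real.log_one] at h
    have : 1/phi - 1 ≥ - Real.log phi := by linarith
    linarith
  have hlogphi' : 0.378 < Real.log phi := by
    have : (1:ℝ)/phi < 1/1.61 := by
      apply div_lt_div_of_pos_left <;> linarith
    calc (0.378:ℝ) < 1 - 1/1.61 := by norm_num
      _ < 1 - 1/phi := by linarith
      _ ≤ Real.log phi := hlogphi
  have hlog3pos : 0 < Real.log 3 := Real.log_pos (by norm_num)
  -- key inequality
  have hkey : Real.sqrt 5 * c * (3 - 4 * c ^ 2) / (5 - 4 * c ^ 2) ^ 2 * Real.log 3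
      < Real.log phi * (c / (1 - c ^ 2)) := by
    have h1 : Real.sqrt 5 * c * (3 - 4 * c ^ 2) / (5 - 4 * c ^ 2) ^ 2
        ≤ Real.sqrt 5 * c / 8 := by
      rw [div_le_div_iff₀ (by positivity) (by norm_num)]
      nlinarith [sq_nonneg (1 - 4 * c ^ 2), mul_pos hrpos hc0]
    have h2 : Real.sqrt 5 * c / 8 * Real.log 3 < c * 0.378 := by
      have : Real.sqrt 5 * Real.log 3 < 8 * 0.378 := by nlinarith
      nlinarith
    have h3 : c * 0.378 < c * Real.log phi := by nlinarith
    have h4 : c ≤ c / (1 - c ^ 2) := by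
      rw [le_div_iff₀ (by nlinarith)]
      nlinarith
    have h5 : c * Real.log phi ≤ Real.log phi * (c / (1 - c ^ 2)) := by
      rw [mul_comm]
      apply mul_le_mul_of_nonneg_left h4 (by linarith)
    calc Real.sqrt 5 * c * (3 - 4 * c ^ 2) / (5 - 4 * c ^ 2) ^ 2 * Real.log 3
        ≤ Real.sqrt 5 * c / 8 * Real.log 3 := by
          apply mul_le_mul_of_nonneg_right h1 (le_of_lt hlog3pos)
      _ < c * 0.378 := h2
      _ < c * Real.log phi := h3
      _ ≤ Real.log phi * (c / (1 - c ^ 2)) := h5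
  unfold Z
  rw [hA, hB, hL1, hLphi]
  have : 2 * Real.sqrt 5 * c * (4 * c ^ 2 - 3) / (5 - 4 * c ^ 2) ^ 2 * (Real.log 3 / 2)
      = -(Real.sqrt 5 * c * (3 - 4 * c ^ 2) / (5 - 4 * c ^ 2) ^ 2 * Real.log 3) := by
    field_simp; ring
  rw [this]
  linarith
end
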